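/- Let a, b, c ∈ ℂ. Let V be the ℂ-vector space with basis {v_t : t ∈ ℤ} (e.g. the space of finitely supported functions ℤ → ℂ), with linear operators L(n)v_t = (a + t + b·n)v_{n+t} and I(n)v_t = c·v_{n+t} for n ∈ ℤ. Then every ℂ-subspace W ⊆ V with L(n)(W) ⊆ W and I(n)(W) ⊆ W for all n ∈ ℤ satisfies W = {0} or W = V, if and only if (a ∉ ℤ, or b ∉ {0, 1}, or c ≠ 0). -/

import Mathlib

lemma opApply {a b : ℂ} (L : ℤ → (ℤ →₀ ℂ) →ₗ[ℂ] (ℤ →₀ ℂ))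
    (hL : ∀ n t : ℤ, L n (Finsupp.single t 1) = (a + t + b * n) • Finsupp.single (n + t) 1)
    (n : ℤ) (w : ℤ →₀ ℂ) (s : ℤ) :
    (L n w) s = (a + ((s - n : ℤ) : ℂ) + b * n) * w (s - n) := by
  induction w using Finsupp.induction_linear with
  | zero => simp
  | add f g hf hg => simp [hf, hg]; ring
  | single t x =>
    have h1 : (Finsupp.single t x : ℤ →₀ ℂ) = x • Finsupp.single t 1 := by
      rw [Finsupp.smul_single]; simp
    rw [h1, map_smul, hL]
    simp only [Finsupp.smul_apply, Finsupp.single_apply, smul_eq_mul]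
    by_cases h : n + t = s
    · have ht : t = s - n := by omega
      subst ht
      simp [h]
      ring
    · have ht : ¬ (t = s - n) := by omega
      simp [h, ht]

lemma iApply {c : ℂ} (I : ℤ → (ℤ →₀ ℂ) →ₗ[ℂ] (ℤ →₀ ℂ))
    (hI : ∀ n t : ℤ, I n (Finsupp.single t 1) = c • Finsupp.single (n + t) 1)
    (n : ℤ) (w : ℤ →₀ ℂ) (s : ℤ) :
    (I n w) s = c * w (s - n) := by
  induction w using Finsupp.induction_linear with
  | zero => simp
  | add f g hf hg => simp [hf, hg]; ring
  | single t x =>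
    have h1 : (Finsupp.single t x : ℤ →₀ ℂ) = x • Finsupp.single t 1 := by
      rw [Finsupp.smul_single]; simp
    rw [h1, map_smul, hI]
    simp only [Finsupp.smul_apply, Finsupp.single_apply, smul_eq_mul]
    by_cases h : n + t = s
    · have ht : t = s - n := by omega
      subst ht
      simp [h]
      ring
    · have ht : ¬ (t = s - n) := by omega
      simp [h, ht]

lemma extract {a : ℂ} (L0 : (ℤ →₀ ℂ) →ₗ[ℂ] (ℤ →₀ ℂ))
    (hL0 : ∀ (w : ℤ →₀ ℂ) (s : ℤ), (L0 w) s = (a + s) * w s)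
    (W : Submodule ℂ (ℤ →₀ ℂ)) (hW : ∀ w ∈ W, L0 w ∈ W) :
    ∀ w ∈ W, w ≠ 0 → ∃ t, Finsupp.single t 1 ∈ W := by
  suffices H : ∀ N : ℕ, ∀ w ∈ W, w ≠ 0 → w.support.card ≤ N → ∃ t, Finsupp.single t 1 ∈ W by
    intro w hw hne
    exact H w.support.card w hw hne le_rfl
  intro N
  induction N with
  | zero =>
    intro w hw hne hcard
    exfalso
    exact hne (Finsupp.support_eq_empty.mp (Finset.card_eq_zero.mp (Nat.le_zero.mp hcard)))
  | succ N ih =>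
    intro w hw hne hcard
    rcases eq_or_lt_of_le hcard with hcard | hcard
    swap
    · exact ih w hw hne (by omega)
    by_cases h1 : w.support.card = 1
    · obtain ⟨t, hx, hwe⟩ := Finsupp.card_support_eq_one.mp h1
      refine ⟨t, ?_⟩
      have : Finsupp.single t 1 = (w t)⁻¹ • w := by
        nth_rewrite 2 [hwe]
        rw [Finsupp.smul_single]
        simp [inv_mul_cancel₀ hx]
      rw [this]
      exact W.smul_mem _ hw
    · have h2 : 1 < w.support.card := by omega
      obtain ⟨t₁, ht₁, t₂, ht₂, hne12⟩ := Finset.one_lt_card.mp h2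
      set w' : ℤ →₀ ℂ := L0 w - (a + t₂) • w with hw'def
      have hw'W : w' ∈ W := W.sub_mem (hW w hw) (W.smul_mem _ hw)
      have hw'app : ∀ s : ℤ, w' s = ((s : ℂ) - t₂) * w s := by
        intro s
        simp [hw'def, hL0]
        ring
      have hsupp : w'.support ⊆ w.support.erase t₂ := by
        intro s hs
        rw [Finsupp.mem_support_iff] at hs
        rw [hw'app] at hs
        have hws : w s ≠ 0 := fun h => hs (by simp [h])
        have hst : s ≠ t₂ := by
          intro h; subst h; simp at hs
        exact Finset.mem_erase.mpr ⟨hst, Finsupp.mem_support_iff.mpr hws⟩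
      have hne' : w' ≠ 0 := by
        intro h
        have := hw'app t₁
        rw [h] at this
        simp at this
        rcases this with h' | h'
        · have : (t₁ : ℂ) = (t₂ : ℂ) := by linear_combination h'
          exact hne12 (by exact_mod_cast this)
        · exact Finsupp.mem_support_iff.mp ht₁ h'
      refine ih w' hw'W hne' ?_
      calc w'.support.card ≤ (w.support.erase t₂).card := Finset.card_le_card hsupp
        _ = w.support.card - 1 := Finset.card_erase_of_mem ht₂
        _ ≤ N := by omega

lemma avoid {a b : ℂ} (hb0 : b ≠ 0) (hb1 : b ≠ 1) (t s : ℤ) :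
    ∃ m : ℤ, a + t + b * ((m - t : ℤ) : ℂ) ≠ 0 ∧ a + m + b * ((s - m : ℤ) : ℂ) ≠ 0 := by
  have u1 : ∀ m₁ m₂ : ℤ, a + t + b * ((m₁ - t : ℤ) : ℂ) = 0 →
      a + t + b * ((m₂ - t : ℤ) : ℂ) = 0 → m₁ = m₂ := by
    intro m₁ m₂ h1 h2
    have h : b * (m₁ : ℂ) = b * m₂ := by
      push_cast at h1 h2 ⊢
      linear_combination h1 - h2
    have := mul_left_cancel₀ hb0 h
    exact_mod_cast this
  have u2 : ∀ m₁ m₂ : ℤ, a + m₁ + b * ((s - m₁ : ℤ) : ℂ) = 0 →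
      a + m₂ + b * ((s - m₂ : ℤ) : ℂ) = 0 → m₁ = m₂ := by
    intro m₁ m₂ h1 h2
    have h : (1 - b) * (m₁ : ℂ) = (1 - b) * m₂ := by
      push_cast at h1 h2 ⊢
      linear_combination h1 - h2
    have h1b : (1 : ℂ) - b ≠ 0 := sub_ne_zero.mpr (Ne.symm hb1)
    have := mul_left_cancel₀ h1b h
    exact_mod_cast this
  by_contra hcon
  push_neg at hcon
  have h3 : ∀ m : ℤ, a + t + b * ((m - t : ℤ) : ℂ) = 0 ∨ a + m + b * ((s - m : ℤ) : ℂ) = 0 := by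
    intro m
    by_cases h : a + t + b * ((m - t : ℤ) : ℂ) = 0
    · exact Or.inl h
    · exact Or.inr (hcon m h)
  rcases h3 0 with h0 | h0 <;> rcases h3 1 with h1 | h1 <;> rcases h3 2 with h2 | h2 <;>
    first
      | (have := u1 0 1 h0 h1; omega)
      | (have := u1 0 2 h0 h2; omega)
      | (have := u1 1 2 h1 h2; omega)
      | (have := u2 0 1 h0 h1; omega)
      | (have := u2 0 2 h0 h2; omega)
      | (have := u2 1 2 h1 h2; omega)

/-- Simplicity criterion for `𝒜_{a,b,c}`: the module, realized on the space
`ℤ →₀ ℂ` with basis `{v_t = single t 1 : t ∈ ℤ}` and actions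
`L(n)v_t = (a + t + b n)v_{n+t}`, `I(n)v_t = c v_{n+t}`, has no nonzero proper
invariant subspace if and only if `a ∉ ℤ`, or `b ∉ {0, 1}`, or `c ≠ 0`. -/
theorem stmt_15 (a b c : ℂ)
    (L I : ℤ → (ℤ →₀ ℂ) →ₗ[ℂ] (ℤ →₀ ℂ))
    (hL : ∀ n t : ℤ,
      L n (Finsupp.single t 1) = (a + t + b * n) • Finsupp.single (n + t) 1)
    (hI : ∀ n t : ℤ,
      I n (Finsupp.single t 1) = c • Finsupp.single (n + t) 1) :
    (∀ W : Submodule ℂ (ℤ →₀ ℂ),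
        (∀ n : ℤ, ∀ w ∈ W, L n w ∈ W) →
        (∀ n : ℤ, ∀ w ∈ W, I n w ∈ W) →
        W = ⊥ ∨ W = ⊤)
      ↔ ((∀ k : ℤ, a ≠ (k : ℂ)) ∨ (b ≠ 0 ∧ b ≠ 1) ∨ c ≠ 0) := by
  constructor
  · -- LHS → RHS by contraposition
    intro hdich
    by_contra hn
    push_neg at hn
    obtain ⟨⟨k, hk⟩, hb, hc⟩ := hn
    by_cases hb0 : b = 0
    · -- W = span of single (-k) 1
      set v : ℤ →₀ ℂ := Finsupp.single (-k) 1 with hv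
      set W : Submodule ℂ (ℤ →₀ ℂ) := Submodule.span ℂ {v} with hWdef
      have hvW : v ∈ W := Submodule.mem_span_singleton_self v
      have hkill : ∀ n : ℤ, L n v = 0 := by
        intro n
        rw [hv, hL]
        have : a + ((-k : ℤ) : ℂ) + b * n = 0 := by
          rw [hk, hb0]; push_cast; ring
        rw [this, zero_smul]
      have hkillI : ∀ n : ℤ, I n v = 0 := by
        intro n
        rw [hv, hI, hc, zero_smul]
      have hLW : ∀ n : ℤ, ∀ w ∈ W, L n w ∈ W := by
        intro n w hw
        obtain ⟨x, rfl⟩ := Submodule.mem_span_singleton.mp hw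
        rw [map_smul, hkill, smul_zero]
        exact W.zero_mem
      have hIW : ∀ n : ℤ, ∀ w ∈ W, I n w ∈ W := by
        intro n w hw
        obtain ⟨x, rfl⟩ := Submodule.mem_span_singleton.mp hw
        rw [map_smul, hkillI, smul_zero]
        exact W.zero_mem
      rcases hdich W hLW hIW with h | h
      · rw [h, Submodule.mem_bot] at hvW
        have := congrArg (fun f => f (-k)) hvW
        simp [hv] at this
      · have hmem1 : Finsupp.single (1 - k) 1 ∈ W := h ▸ Submodule.mem_top
        obtain ⟨x, hx⟩ := Submodule.mem_span_singleton.mp hmem1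
        have hev := congrArg (fun f => f (1 - k)) hx
        have h1k : ¬ ((-k : ℤ) = 1 - k) := by omega
        simp [hv, Finsupp.single_apply, h1k] at hev
    · -- b = 1 case : W = ker of evaluation at -k
      have hb1 : b = 1 := hb hb0
      set W : Submodule ℂ (ℤ →₀ ℂ) := LinearMap.ker (Finsupp.lapply (-k) : (ℤ →₀ ℂ) →ₗ[ℂ] ℂ)
        with hWdef
      have hmem : ∀ w : ℤ →₀ ℂ, w ∈ W ↔ w (-k) = 0 := by
        intro w
        rw [hWdef, LinearMap.mem_ker]
        rfl
      have hLW : ∀ n : ℤ, ∀ w ∈ W, L n w ∈ W := by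
        intro n w hw
        rw [hmem]
        rw [opApply L hL n w (-k)]
        have : a + ((-k - n : ℤ) : ℂ) + b * n = 0 := by
          rw [hk, hb1]; push_cast; ring
        rw [this, zero_mul]
      have hIW : ∀ n : ℤ, ∀ w ∈ W, I n w ∈ W := by
        intro n w hw
        rw [hmem, iApply I hI n w (-k), hc, zero_mul]
      rcases hdich W hLW hIW with h | h
      · have : Finsupp.single (1 - k) 1 ∈ W := by
          rw [hmem, Finsupp.single_apply]
          have : ¬ (1 - k = -k) := by omega
          simp [this]
        rw [h] at this
        simp at this
      · have : Finsupp.single (-k) 1 ∈ W := h ▸ Submodule.mem_top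
        rw [hmem, Finsupp.single_apply] at this
        simp at this
  · -- RHS → LHS
    intro hcrit W hLW hIW
    by_cases hbot : W = ⊥
    · exact Or.inl hbot
    right
    obtain ⟨w, hwW, hwne⟩ := Submodule.ne_bot_iff W |>.mp hbot
    have hL0 : ∀ (w : ℤ →₀ ℂ) (s : ℤ), ((L 0) w) s = (a + s) * w s := by
      intro w s
      rw [opApply L hL 0 w s]
      push_cast
      ring_nf
    obtain ⟨t₀, ht₀⟩ := extract (L 0) hL0 W (hLW 0) w hwW hwne
    -- single-step transfer
    have step : ∀ t s : ℤ, a + t + b * ((s - t : ℤ) : ℂ) ≠ 0 →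
        Finsupp.single t 1 ∈ W → Finsupp.single s 1 ∈ W := by
      intro t s hκ hmem
      have h := hLW (s - t) _ hmem
      rw [hL] at h
      have he : (s - t) + t = s := by omega
      rw [he] at h
      have h2 := W.smul_mem (a + t + b * ((s - t : ℤ) : ℂ))⁻¹ h
      rwa [inv_smul_smul₀ hκ] at h2
    -- all basis vectors in W
    have allsingles : ∀ s : ℤ, Finsupp.single s 1 ∈ W := by
      intro s
      rcases hcrit with ha | ⟨hb0, hb1⟩ | hc
      · by_cases hb0 : b = 0
        · refine step t₀ s ?_ ht₀
          rw [hb0]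
          intro h
          apply ha (-t₀)
          push_cast at h ⊢
          linear_combination h
        · by_cases hb1 : b = 1
          · refine step t₀ s ?_ ht₀
            rw [hb1]
            intro h
            apply ha (-s)
            push_cast at h ⊢
            linear_combination h
          · obtain ⟨m, hm1, hm2⟩ := avoid hb0 hb1 t₀ s
            exact step m s hm2 (step t₀ m hm1 ht₀)
      · obtain ⟨m, hm1, hm2⟩ := avoid hb0 hb1 t₀ s
        exact step m s hm2 (step t₀ m hm1 ht₀)
      · have h := hIW (s - t₀) _ ht₀
        rw [hI] at h
        have he : (s - t₀) + t₀ = s := by omega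
        rw [he] at h
        have h2 := W.smul_mem c⁻¹ h
        rwa [inv_smul_smul₀ hc] at h2
    rw [Submodule.eq_top_iff']
    intro f
    induction f using Finsupp.induction_linear with
    | zero => exact W.zero_mem
    | add f g hf hg => exact W.add_mem hf hg
    | single t x =>
      have : (Finsupp.single t x : ℤ →₀ ℂ) = x • Finsupp.single t 1 := by
        rw [Finsupp.smul_single]; simp
      rw [this]
      exact W.smul_mem x (allsingles t)
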